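/- Let X be a set, μ : (X → {0,1}) → [0,∞) modular and monotone with μ(0) = 0, and define the integral of a simple function by ∫(∑_{k=1}^{n} a_k f_k) dμ := ∑_{k=1}^{n} a_k μ(f_k). Then this is well-defined: if ∑_{k=1}^{n} a_k f_k(x) = ∑_{ℓ=1}^{m} b_ℓ g_ℓ(x) for all x ∈ X, where each f_k, g_ℓ : X → {0,1}, a_k, b_ℓ ∈ ℝ, and μ additionally satisfies μ(f) = μ(f∧g) + μ(f∧(1−g)), then ∑_{k=1}^{n} a_k μ(f_k) = ∑_{ℓ=1}^{m} b_ℓ μ(g_ℓ). -/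

import Mathlib

open Finset

/-- Splitting lemma: `μ f` is the sum of `μ` over the atoms determined by a
finite family of `Bool`-valued functions. -/
theorem stmt_18_split {X : Type*} (μ : (X → Bool) → ℝ)
    (hsub : ∀ f g : X → Bool,
      μ f = μ (fun x => f x && g x) + μ (fun x => f x && ! g x)) :
    ∀ (N : ℕ) (h : Fin N → X → Bool) (f : X → Bool),
      μ f = ∑ s : Fin N → Bool, μ (fun x => f x && decide (∀ k, h k x = s k)) := by
  intro N
  induction N with
  | zero => intro h f; simp
  | succ N ih =>
    intro h f
    rw [hsub f (h 0), ih (fun k => h k.succ) (fun x => f x && h 0 x),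
        ih (fun k => h k.succ) (fun x => f x && ! h 0 x)]
    rw [← (Fin.consEquiv (fun _ : Fin (N+1) => Bool)).sum_comp
      (fun s => μ (fun x => f x && decide (∀ k, h k x = s k)))]
    rw [Fintype.sum_prod_type, Finset.sum_comm]
    simp only [Fintype.sum_bool, Fin.consEquiv_apply]
    rw [← Finset.sum_add_distrib]
    apply Finset.sum_congr rfl
    intro s _
    have e1 : (fun x => (f x && h 0 x) && decide (∀ k : Fin N, h k.succ x = s k))
        = (fun x => f x && decide (∀ k : Fin (N+1), h k x = (Fin.cons true s : Fin (N+1) → Bool) k)) := by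
      funext x; cases hb : h 0 x <;> simp [Fin.forall_fin_succ, hb]
    have e2 : (fun x => (f x && ! h 0 x) && decide (∀ k : Fin N, h k.succ x = s k))
        = (fun x => f x && decide (∀ k : Fin (N+1), h k x = (Fin.cons false s : Fin (N+1) → Bool) k)) := by
      funext x; cases hb : h 0 x <;> simp [Fin.forall_fin_succ, hb]
    rw [e1, e2]

/-- If a signed combination of indicator functions vanishes pointwise, then the
corresponding combination of measures vanishes. -/
theorem stmt_18_zero {X : Type*} (μ : (X → Bool) → ℝ)
    (hsub : ∀ f g : X → Bool,
      μ f = μ (fun x => f x && g x) + μ (fun x => f x && ! g x))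
    (hzero : μ (fun _ => false) = 0)
    (N : ℕ) (h : Fin N → X → Bool) (c : Fin N → ℝ)
    (h0 : ∀ x : X, (∑ k, c k * (if h k x then (1 : ℝ) else 0)) = 0) :
    ∑ k, c k * μ (h k) = 0 := by
  have split := stmt_18_split μ hsub N h
  set A : (Fin N → Bool) → X → Bool := fun s x => decide (∀ k, h k x = s k) with hA
  have hterm : ∀ (k : Fin N) (s : Fin N → Bool),
      μ (fun x => h k x && A s x) = (if s k then (1:ℝ) else 0) * μ (A s) := by
    intro k s
    have e : (fun x => h k x && A s x) = (fun x => s k && A s x) := by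
      funext x
      by_cases hx : A s x = true
      · rw [hx, Bool.and_true, Bool.and_true, of_decide_eq_true hx k]
      · have hx' : A s x = false := by simpa using hx
        rw [hx', Bool.and_false, Bool.and_false]
    rw [e]
    cases hsk : s k
    · simp only [Bool.false_and]
      rw [hzero]; simp
    · simp only [Bool.true_and]; simp
  calc ∑ k, c k * μ (h k)
      = ∑ k, c k * ∑ s : Fin N → Bool, μ (fun x => h k x && A s x) := by
        apply Finset.sum_congr rfl; intro k _; rw [← split (h k)]
    _ = ∑ s : Fin N → Bool, ∑ k, c k * ((if s k then (1:ℝ) else 0) * μ (A s)) := by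
        simp only [Finset.mul_sum]
        rw [Finset.sum_comm]
        apply Finset.sum_congr rfl; intro s _
        apply Finset.sum_congr rfl; intro k _
        rw [hterm k s]
    _ = ∑ s : Fin N → Bool, (∑ k, c k * (if s k then (1:ℝ) else 0)) * μ (A s) := by
        apply Finset.sum_congr rfl; intro s _
        rw [Finset.sum_mul]
        apply Finset.sum_congr rfl; intro k _; ring
    _ = 0 := by
        apply Finset.sum_eq_zero
        intro s _
        by_cases hne : ∃ x, A s x = true
        · obtain ⟨x, hx⟩ := hne
          have hk : ∀ k, h k x = s k := of_decide_eq_true hx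
          have e0 : (∑ k, c k * (if s k then (1:ℝ) else 0))
              = ∑ k, c k * (if h k x then (1:ℝ) else 0) :=
            Finset.sum_congr rfl fun k _ => by rw [hk k]
          rw [e0, h0 x, zero_mul]
        · have : A s = (fun _ => false) := by
            funext x
            by_contra hc
            exact hne ⟨x, by simpa using hc⟩
          rw [this, hzero, mul_zero]

/-- the integral of a simple function is well defined
(Lemma pre-10.6(ii)). -/
theorem stmt_18 {X : Type*} (μ : (X → Bool) → ℝ)
    (hnn : ∀ f, 0 ≤ μ f)
    (hmod : ∀ f g : X → Bool,
      μ f + μ g = μ (fun x => f x || g x) + μ (fun x => f x && g x))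
    (hsub : ∀ f g : X → Bool,
      μ f = μ (fun x => f x && g x) + μ (fun x => f x && ! g x))
    (hmono : ∀ f g : X → Bool, (∀ x, f x ≤ g x) → μ f ≤ μ g)
    (hzero : μ (fun _ => false) = 0)
    (n m : ℕ) (f : Fin n → X → Bool) (a : Fin n → ℝ)
    (g : Fin m → X → Bool) (b : Fin m → ℝ)
    (heq : ∀ x : X,
      (∑ k, a k * (if f k x then (1 : ℝ) else 0)) =
        ∑ l, b l * (if g l x then (1 : ℝ) else 0)) :
    ∑ k, a k * μ (f k) = ∑ l, b l * μ (g l) := by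
  have key := stmt_18_zero μ hsub hzero (n + m) (Fin.append f g)
    (Fin.append a (fun l => - b l)) ?_
  · rw [Fin.sum_univ_add] at key
    simp only [Fin.append_left, Fin.append_right] at key
    have e : ∑ x : Fin m, -b x * μ (g x) = -∑ l, b l * μ (g l) := by
      simp [neg_mul]
    rw [e] at key
    linarith
  · intro x
    rw [Fin.sum_univ_add]
    simp only [Fin.append_left, Fin.append_right]
    rw [heq x, ← Finset.sum_add_distrib]
    apply Finset.sum_eq_zero
    intro l _
    by_cases hg : g l x = true <;> simp [hg]
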